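/- Let (X,d) be a finite nonempty ultrametric space and let Δ(X,d) denote the number of open balls of (X,d) that are not centered spheres of (X,d). Then an UGVL-extension (Y,ρ) of (X,d) is minimal if and only if card Y = Δ(X,d) + card X. -/

import Mathlib

/-- `d` is an ultrametric on `X`: a nonnegative, symmetric function vanishing
exactly on the diagonal and satisfying the strong triangle inequality. -/
def IsUltrametricOn {X : Type*} (d : X → X → ℝ) : Prop :=
  (∀ x y, 0 ≤ d x y) ∧ (∀ x y, d x y = d y x) ∧
  (∀ x y, d x y = 0 ↔ x = y) ∧
  (∀ x y z, d x y ≤ max (d x z) (d z y))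

/-- `B` is an open ball of the space `(X, d)`. -/
def IsOpenBallOf {X : Type*} (d : X → X → ℝ) (B : Set X) : Prop :=
  ∃ c : X, ∃ r : ℝ, 0 < r ∧ B = {x | d c x < r}

/-- `C` is a centered sphere of the space `(X, d)`. -/
def IsCenteredSphereOf {X : Type*} (d : X → X → ℝ) (C : Set X) : Prop :=
  ∃ c ∈ C, ∃ r : ℝ, 0 ≤ r ∧ C = {x | d x c = r} ∪ {c}

/-- The diameter `sup {d x y : x, y ∈ A}` of a subset `A` of `(X, d)`. -/
noncomputable def setDiam {X : Type*} (d : X → X → ℝ) (A : Set X) : ℝ :=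
  sSup {r | ∃ x ∈ A, ∃ y ∈ A, r = d x y}

/-- A space is locally finite if all of its open balls are finite sets. -/
def IsLocallyFiniteOn {X : Type*} (d : X → X → ℝ) : Prop :=
  ∀ B : Set X, IsOpenBallOf d B → B.Finite

/-- The maximum of the (nonnegative) labels of the vertices of a walk `p`. -/
def walkMax {X : Type*} {T : SimpleGraph X} (l : X → ℝ) {u v : X} (p : T.Walk u v) : ℝ :=
  (p.support.map l).foldr max 0

/-- The function `d` is generated by the tree `T` with nonnegative vertex labeling `l`,
i.e. `d u u = 0` and, for `u ≠ v`, `d u v` is the maximum of the labels of the vertices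
on the (unique) path joining `u` and `v` in `T`. -/
def GeneratedBy {X : Type*} (d : X → X → ℝ) (T : SimpleGraph X) (l : X → ℝ) : Prop :=
  T.IsTree ∧ (∀ x, 0 ≤ l x) ∧ (∀ u, d u u = 0) ∧
  ∀ u v : X, u ≠ v → ∀ p : T.Walk u v, p.IsPath → d u v = walkMax l p

/-- `(X, d)` belongs to the class UGVL: it is generated by some labeled tree. -/
def IsUGVL {X : Type*} (d : X → X → ℝ) : Prop :=
  ∃ (T : SimpleGraph X) (l : X → ℝ), GeneratedBy d T l

/-- `(Y, ρ)` is an UGVL-extension of `(X, d)`: an ultrametric UGVL-space into which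
`(X, d)` embeds isometrically. -/
def IsUGVLExtension {X Y : Type*} (d : X → X → ℝ) (ρ : Y → Y → ℝ) : Prop :=
  IsUltrametricOn ρ ∧ IsUGVL ρ ∧ ∃ Φ : X → Y, ∀ x y : X, ρ (Φ x) (Φ y) = d x y

/-- An UGVL-extension is minimal if no proper subspace of it is an UGVL-extension of
`(X, d)`. -/
def IsMinimalUGVLExtension {X Y : Type*} (d : X → X → ℝ) (ρ : Y → Y → ℝ) : Prop :=
  IsUGVLExtension d ρ ∧
  ∀ Y₀ : Set Y, Y₀ ≠ Set.univ → ¬ IsUGVLExtension d (fun a b : Y₀ => ρ a b)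
set_option linter.unusedSectionVars false
open Set

section Ult
variable {X : Type*} [Finite X] {d : X → X → ℝ}

lemma diamSet_eq (A : Set X) :
    {r | ∃ x ∈ A, ∃ y ∈ A, r = d x y} = (fun p : X × X => d p.1 p.2) '' (A ×ˢ A) := by
  ext r; constructor
  · rintro ⟨x, hx, y, hy, rfl⟩; exact ⟨(x,y), ⟨hx,hy⟩, rfl⟩
  · rintro ⟨⟨x,y⟩, ⟨hx,hy⟩, rfl⟩; exact ⟨x, hx, y, hy, rfl⟩

lemma diamSet_finite (A : Set X) : {r | ∃ x ∈ A, ∃ y ∈ A, r = d x y}.Finite := by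
  rw [diamSet_eq]; exact ((A ×ˢ A).toFinite).image _

lemma diamSet_nonempty {A : Set X} (hA : A.Nonempty) :
    {r | ∃ x ∈ A, ∃ y ∈ A, r = d x y}.Nonempty := by
  obtain ⟨a, ha⟩ := hA; exact ⟨d a a, a, ha, a, ha, rfl⟩

lemma le_setDiam (hd : IsUltrametricOn d) {A : Set X} {x y : X} (hx : x ∈ A) (hy : y ∈ A) :
    d x y ≤ setDiam d A :=
  le_csSup (diamSet_finite A).bddAbove ⟨x, hx, y, hy, rfl⟩

lemma setDiam_attained {A : Set X} (hA : A.Nonempty) :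
    ∃ x ∈ A, ∃ y ∈ A, setDiam d A = d x y :=
  (diamSet_nonempty hA).csSup_mem (diamSet_finite A)

lemma setDiam_nonneg (hd : IsUltrametricOn d) {A : Set X} (hA : A.Nonempty) :
    0 ≤ setDiam d A := by
  obtain ⟨a, ha⟩ := hA
  have := le_setDiam hd (A := A) ha ha
  rwa [(hd.2.2.1 a a).2 rfl] at this

lemma setDiam_mono {A B : Set X} (hA : A.Nonempty) (hAB : A ⊆ B) :
    setDiam d A ≤ setDiam d B := by
  apply csSup_le_csSup (diamSet_finite B).bddAbove (diamSet_nonempty hA)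
  rintro r ⟨x, hx, y, hy, rfl⟩
  exact ⟨x, hAB hx, y, hAB hy, rfl⟩

end Ult

section Balls
variable {X : Type*} [Finite X] {d : X → X → ℝ}

lemma ball_nonempty (hd : IsUltrametricOn d) {B : Set X} (hB : IsOpenBallOf d B) :
    B.Nonempty := by
  obtain ⟨c, r, hr, rfl⟩ := hB
  exact ⟨c, by simp [(hd.2.2.1 c c).2 rfl, hr]⟩

lemma ball_pair_lt (hd : IsUltrametricOn d) {c : X} {r : ℝ} {x y : X}
    (hx : d c x < r) (hy : d c y < r) : d x y < r := by
  have := hd.2.2.2 x y c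
  have hxc : d x c = d c x := hd.2.1 x c
  calc d x y ≤ max (d x c) (d c y) := this
    _ < r := by rw [hxc]; exact max_lt hx hy

lemma setDiam_ball_lt (hd : IsUltrametricOn d) {B : Set X} {c : X} {r : ℝ}
    (hr : 0 < r) (hBe : B = {x | d c x < r}) : setDiam d B < r := by
  have hne : B.Nonempty := ball_nonempty hd ⟨c, r, hr, hBe⟩
  obtain ⟨x, hx, y, hy, hxy⟩ := setDiam_attained hne
  rw [hxy]
  rw [hBe] at hx hy
  exact ball_pair_lt hd hx hy

/-- an open ball equals the closed ball of its diameter around any of its points -/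
lemma ball_eq_cball (hd : IsUltrametricOn d) {B : Set X} (hB : IsOpenBallOf d B)
    {b : X} (hb : b ∈ B) : B = {y | d b y ≤ setDiam d B} := by
  obtain ⟨c, r, hr, rfl⟩ := hB
  ext y
  constructor
  · intro hy
    exact le_setDiam hd hb hy
  · intro hy
    have hlt : setDiam d {x | d c x < r} < r := setDiam_ball_lt hd hr rfl
    have : d c y ≤ max (d c b) (d b y) := hd.2.2.2 c y b
    have : d c y < r := lt_of_le_of_lt this (max_lt hb (lt_of_le_of_lt hy hlt))
    exact this

lemma balls_nested (hd : IsUltrametricOn d) {B B' : Set X}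
    (hB : IsOpenBallOf d B) (hB' : IsOpenBallOf d B')
    (hne : (B ∩ B').Nonempty) : B ⊆ B' ∨ B' ⊆ B := by
  obtain ⟨b, hb, hb'⟩ := hne
  rcases le_total (setDiam d B) (setDiam d B') with h | h
  · left
    rw [ball_eq_cball hd hB hb, ball_eq_cball hd hB' hb']
    intro y hy; exact le_trans hy h
  · right
    rw [ball_eq_cball hd hB hb, ball_eq_cball hd hB' hb']
    intro y hy; exact le_trans hy h

lemma ssubset_setDiam_lt (hd : IsUltrametricOn d) {B B' : Set X}
    (hB : IsOpenBallOf d B) (hB' : IsOpenBallOf d B')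
    (hss : B ⊂ B') : setDiam d B < setDiam d B' := by
  have hne : B.Nonempty := ball_nonempty hd hB
  obtain ⟨b, hb⟩ := hne
  have hle : setDiam d B ≤ setDiam d B' := setDiam_mono ⟨b, hb⟩ hss.1
  rcases lt_or_eq_of_le hle with h | h
  · exact h
  · exfalso
    apply hss.2
    rw [ball_eq_cball hd hB' (hss.1 hb), ball_eq_cball hd hB hb, h]

/-- distances from an outside point are constant and exceed the diameter -/
lemma outside_gt (hd : IsUltrametricOn d) {B : Set X} (hB : IsOpenBallOf d B)
    {x b : X} (hx : x ∉ B) (hb : b ∈ B) : setDiam d B < d x b := by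
  by_contra h
  push_neg at h
  apply hx
  rw [ball_eq_cball hd hB hb]
  simpa [hd.2.1 b x] using h

lemma outside_const (hd : IsUltrametricOn d) {B : Set X} (hB : IsOpenBallOf d B)
    {x b b' : X} (hx : x ∉ B) (hb : b ∈ B) (hb' : b' ∈ B) : d x b = d x b' := by
  have h1 : setDiam d B < d x b := outside_gt hd hB hx hb
  have h2 : setDiam d B < d x b' := outside_gt hd hB hx hb'
  have hbb' : d b b' ≤ setDiam d B := le_setDiam hd hb hb'
  have hb'b : d b' b ≤ setDiam d B := le_setDiam hd hb' hb
  have e1 : d x b' ≤ max (d x b) (d b b') := hd.2.2.2 x b' b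
  have e2 : d x b ≤ max (d x b') (d b' b) := hd.2.2.2 x b b'
  apply le_antisymm
  · exact le_trans e2 (max_le (le_refl _) (le_of_lt (lt_of_le_of_lt hb'b h2)))
  · exact le_trans e1 (max_le (le_refl _) (le_of_lt (lt_of_le_of_lt hbb' h1)))

lemma cball_isBall (hd : IsUltrametricOn d) (b : X) {t : ℝ} (ht : 0 ≤ t) :
    IsOpenBallOf d {y | d b y ≤ t} := by
  by_cases h : ∃ y, t < d b y
  · set S := {r | ∃ y, r = d b y ∧ t < r} with hS
    have hSfin : S.Finite := (Set.finite_range (d b)).subset (by rintro r ⟨y, rfl, _⟩; exact ⟨y, rfl⟩)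
    have hSne : S.Nonempty := by obtain ⟨y, hy⟩ := h; exact ⟨d b y, y, rfl, hy⟩
    set s := sInf S with hs
    have hsmem : s ∈ S := hSne.csInf_mem hSfin
    obtain ⟨y₀, hy₀, hty₀⟩ := hsmem
    refine ⟨b, s, lt_of_le_of_lt ht hty₀, ?_⟩
    ext y
    simp only [Set.mem_setOf_eq]
    constructor
    · intro hy
      exact lt_of_le_of_lt hy hty₀
    · intro hy
      by_contra hcon
      push_neg at hcon
      have : s ≤ d b y := csInf_le hSfin.bddBelow ⟨y, rfl, hcon⟩
      exact absurd hy (not_lt.2 this)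
  · push_neg at h
    refine ⟨b, t + 1, by linarith, ?_⟩
    ext y
    simp only [Set.mem_setOf_eq]
    constructor
    · intro hy; linarith
    · intro _; exact h y

end Balls

section Balls2
variable {X : Type*} [Finite X] {d : X → X → ℝ}

lemma univ_isBall (hd : IsUltrametricOn d) [Nonempty X] :
    IsOpenBallOf d (Set.univ : Set X) := by
  obtain ⟨x₀⟩ := ‹Nonempty X›
  have h := cball_isBall hd x₀ (setDiam_nonneg hd (Set.univ_nonempty (α := X)) (A := Set.univ))
  have : {y | d x₀ y ≤ setDiam d (Set.univ : Set X)} = Set.univ := by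
    ext y; simp only [Set.mem_setOf_eq, Set.mem_univ, iff_true]
    exact le_setDiam hd (Set.mem_univ x₀) (Set.mem_univ y)
  rwa [this] at h

lemma singleton_isBall (hd : IsUltrametricOn d) (x : X) :
    IsOpenBallOf d ({x} : Set X) := by
  have h := cball_isBall hd x (le_refl (0:ℝ))
  have : {y | d x y ≤ 0} = ({x} : Set X) := by
    ext y
    simp only [Set.mem_setOf_eq, Set.mem_singleton_iff]
    constructor
    · intro hy
      exact ((hd.2.2.1 x y).1 (le_antisymm hy (hd.1 x y))).symm
    · rintro rfl; exact le_of_eq ((hd.2.2.1 y y).2 rfl)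
  rwa [this] at h

lemma singleton_isCenteredSphere (hd : IsUltrametricOn d) (c : X) :
    IsCenteredSphereOf d ({c} : Set X) := by
  refine ⟨c, rfl, 0, le_refl _, ?_⟩
  ext y
  simp only [Set.mem_singleton_iff, Set.mem_union, Set.mem_setOf_eq]
  constructor
  · rintro rfl; right; rfl
  · rintro (h | h)
    · exact (hd.2.2.1 y c).1 h
    · exact h

/-- a good (centered-sphere) open ball has a point at distance `diam` from all others -/
lemma good_center (hd : IsUltrametricOn d) {B : Set X} (hB : IsOpenBallOf d B)
    (hC : IsCenteredSphereOf d B) :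
    ∃ c ∈ B, ∀ x ∈ B, x ≠ c → d x c = setDiam d B := by
  obtain ⟨c, hc, r, hr0, hEq⟩ := hC
  refine ⟨c, hc, ?_⟩
  by_cases hsing : ∀ x ∈ B, x = c
  · intro x hx hxc; exact absurd (hsing x hx) hxc
  · push_neg at hsing
    obtain ⟨x₀, hx₀, hx₀c⟩ := hsing
    have hx₀r : d x₀ c = r := by
      have := hEq ▸ hx₀
      rcases this with h | h
      · exact h
      · exact absurd h hx₀c
    have hrd : r ≤ setDiam d B := hx₀r ▸ le_setDiam hd hx₀ hc
    have hdr : setDiam d B ≤ r := by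
      obtain ⟨a, ha, b, hb, hab⟩ := setDiam_attained (⟨c, hc⟩ : B.Nonempty)
      rw [hab]
      have hsp : ∀ z ∈ B, d z c ≤ r := by
        intro z hz
        have := hEq ▸ hz
        rcases this with h | h
        · exact le_of_eq h
        · simp only [Set.mem_singleton_iff] at h
          subst h
          rw [(hd.2.2.1 z z).2 rfl]; exact hr0
      calc d a b ≤ max (d a c) (d c b) := hd.2.2.2 a b c
        _ ≤ r := max_le (hsp a ha) (by rw [hd.2.1 c b]; exact hsp b hb)
    intro x hx hxc
    have := hEq ▸ hx
    rcases this with h | h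
    · rw [h]; exact le_antisymm hrd hdr
    · exact absurd h hxc

/-- a bad ball contains two points realizing its (positive) diameter -/
lemma bad_two (hd : IsUltrametricOn d) {B : Set X} (hB : IsOpenBallOf d B)
    (hC : ¬ IsCenteredSphereOf d B) :
    ∃ u ∈ B, ∃ v ∈ B, u ≠ v ∧ d u v = setDiam d B ∧ 0 < setDiam d B := by
  have hne : B.Nonempty := ball_nonempty hd hB
  have h2 : ∃ u ∈ B, ∃ v ∈ B, u ≠ v := by
    by_contra h
    push_neg at h
    obtain ⟨b, hb⟩ := hne
    have : B = {b} := by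
      ext y; simp only [Set.mem_singleton_iff]
      exact ⟨fun hy => h y hy b hb, fun hy => hy ▸ hb⟩
    rw [this] at hC
    exact hC (singleton_isCenteredSphere hd b)
  obtain ⟨u0, hu0, v0, hv0, huv0⟩ := h2
  have hpos : 0 < setDiam d B := by
    have : d u0 v0 ≤ setDiam d B := le_setDiam hd hu0 hv0
    have hdpos : 0 < d u0 v0 := by
      rcases lt_or_eq_of_le (hd.1 u0 v0) with h | h
      · exact h
      · exact absurd ((hd.2.2.1 u0 v0).1 h.symm) huv0
    linarith
  obtain ⟨u, hu, v, hv, huv⟩ := setDiam_attained hne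
  refine ⟨u, hu, v, hv, ?_, huv.symm, hpos⟩
  rintro rfl
  rw [(hd.2.2.1 u u).2 rfl] at huv
  linarith [huv ▸ hpos]

end Balls2

section WalkMax

lemma foldr_max_nonneg (L : List ℝ) : 0 ≤ L.foldr max 0 := by
  induction L with
  | nil => simp
  | cons a t ih => simp only [List.foldr_cons]; exact le_max_of_le_right ih

lemma le_foldr_max {L : List ℝ} {a : ℝ} (h : a ∈ L) : a ≤ L.foldr max 0 := by
  induction L with
  | nil => simp at h
  | cons b t ih =>
    simp only [List.foldr_cons]
    rcases List.mem_cons.1 h with rfl | h'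
    · exact le_max_left _ _
    · exact le_max_of_le_right (ih h')

lemma foldr_max_le {L : List ℝ} {c : ℝ} (h0 : 0 ≤ c) (h : ∀ a ∈ L, a ≤ c) :
    L.foldr max 0 ≤ c := by
  induction L with
  | nil => simpa
  | cons b t ih =>
    simp only [List.foldr_cons]
    exact max_le (h b List.mem_cons_self) (ih fun a ha => h a (List.mem_cons_of_mem _ ha))

lemma foldr_max_mem {L : List ℝ} (h : L.foldr max 0 ≠ 0) : L.foldr max 0 ∈ L := by
  induction L with
  | nil => simp at h
  | cons b t ih =>
    simp only [List.foldr_cons] at h ⊢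
    rcases max_cases b (t.foldr max 0) with ⟨he, _⟩ | ⟨he, _⟩
    · rw [he]; exact List.mem_cons_self
    · rw [he] at h ⊢
      exact List.mem_cons_of_mem _ (ih h)

variable {Y : Type*} {T : SimpleGraph Y} {l : Y → ℝ}

lemma walkMax_nonneg {u v : Y} (p : T.Walk u v) : 0 ≤ walkMax l p :=
  foldr_max_nonneg _

lemma le_walkMax {u v z : Y} {p : T.Walk u v} (hz : z ∈ p.support) :
    l z ≤ walkMax l p :=
  le_foldr_max (List.mem_map.2 ⟨z, hz, rfl⟩)

lemma walkMax_le {u v : Y} {p : T.Walk u v} {c : ℝ} (h0 : 0 ≤ c)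
    (h : ∀ z ∈ p.support, l z ≤ c) : walkMax l p ≤ c := by
  apply foldr_max_le h0
  intro a ha
  obtain ⟨z, hz, rfl⟩ := List.mem_map.1 ha
  exact h z hz

lemma walkMax_attained {u v : Y} {p : T.Walk u v} (h : walkMax l p ≠ 0) :
    ∃ z ∈ p.support, l z = walkMax l p := by
  have := foldr_max_mem (L := p.support.map l) h
  obtain ⟨z, hz, he⟩ := List.mem_map.1 this
  exact ⟨z, hz, he⟩

end WalkMax

section UGVLSpace
variable {Y : Type*} {ρ : Y → Y → ℝ} {T : SimpleGraph Y} {l : Y → ℝ}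

lemma exists_isPath (hgen : GeneratedBy ρ T l) (u v : Y) :
    ∃ p : T.Walk u v, p.IsPath := by
  classical
  have hr : T.Reachable u v := hgen.1.isConnected.preconnected u v
  obtain ⟨w⟩ := hr
  exact ⟨w.bypass, w.bypass_isPath⟩

lemma label_le_rho (hgen : GeneratedBy ρ T l) {w z : Y} (hwz : w ≠ z) :
    l w ≤ ρ w z := by
  obtain ⟨p, hp⟩ := exists_isPath hgen w z
  rw [hgen.2.2.2 w z hwz p hp]
  exact le_walkMax p.start_mem_support

/-- key existence of a "center" vertex on the path between two points -/
lemma exists_center (hρ : IsUltrametricOn ρ) (hgen : GeneratedBy ρ T l)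
    {u v : Y} (huv : u ≠ v) :
    ∃ w : Y, l w = ρ u v ∧ ρ u w ≤ ρ u v := by
  classical
  obtain ⟨p, hp⟩ := exists_isPath hgen u v
  have hval : ρ u v = walkMax l p := hgen.2.2.2 u v huv p hp
  have hpos : ρ u v ≠ 0 := fun h => huv ((hρ.2.2.1 u v).1 h)
  obtain ⟨w, hw, hlw⟩ := walkMax_attained (l := l) (hval ▸ hpos)
  refine ⟨w, by rw [hlw, hval], ?_⟩
  by_cases huw : u = w
  · subst huw
    rw [(hρ.2.2.1 u u).2 rfl]
    exact le_trans (hρ.1 u v) (le_refl _)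
  · have hq : (p.takeUntil w hw).IsPath := hp.takeUntil hw
    rw [hgen.2.2.2 u w huw _ hq, hval]
    apply walkMax_le (walkMax_nonneg p)
    intro z hz
    exact le_walkMax (p.support_takeUntil_subset hw hz)

end UGVLSpace

section ParentTree
open SimpleGraph Walk

variable {V : Type*} [Fintype V]

lemma isTree_of_parent (r : V) (p : V → V) (m : V → ℕ)
    (hm : ∀ z, z ≠ r → m z < m (p z)) (hr : ∀ z, m z ≤ m r)
    (G : SimpleGraph V)
    (hadj : ∀ z z', G.Adj z z' ↔ ((z ≠ r ∧ p z = z') ∨ (z' ≠ r ∧ p z' = z))) :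
    G.IsTree := by
  classical
  have hreach : ∀ z, G.Reachable z r := by
    have key : ∀ n (z : V), m r - m z ≤ n → G.Reachable z r := by
      intro n
      induction n with
      | zero =>
        intro z hz
        by_cases h : z = r
        · subst h; rfl
        · exfalso
          have h1 := hm z h
          have h2 := hr (p z)
          omega
      | succ k ih =>
        intro z hz
        by_cases h : z = r
        · subst h; rfl
        · have hzp : G.Adj z (p z) := (hadj z (p z)).2 (Or.inl ⟨h, rfl⟩)
          have h1 := hm z h
          have h2 := hr (p z)
          exact hzp.reachable.trans (ih (p z) (by omega))
    intro z; exact key (m r - m z) z le_rfl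
  haveI : Nonempty V := ⟨r⟩
  constructor
  · exact SimpleGraph.Connected.mk (fun u v => (hreach u).trans (hreach v).symm)
  · -- acyclic
    intro v c hc
    -- choose a vertex of minimal m on the cycle
    have hsupne : c.support.toFinset.Nonempty := ⟨v, List.mem_toFinset.2 c.start_mem_support⟩
    obtain ⟨w, hwmem, hwmin⟩ := Finset.exists_min_image c.support.toFinset m hsupne
    rw [List.mem_toFinset] at hwmem
    set c' : G.Walk w w := c.rotate w hwmem with hc'def
    have hc' : c'.IsCycle := hc.rotate hwmem
    have hsupp : ∀ z, z ∈ c'.support → m w ≤ m z := by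
      intro z hz
      rcases List.eq_or_mem_of_mem_cons (c'.support_eq_cons ▸ hz) with rfl | hz'
      · exact le_rfl
      · have hperm := support_rotate c w hwmem
        have : z ∈ c.support.tail := hperm.mem_iff.1 hz'
        have : z ∈ c.support := List.mem_of_mem_tail this
        exact hwmin z (List.mem_toFinset.2 this)
    -- decompose the cycle
    have hn : ¬ c'.Nil := hc'.not_nil
    obtain ⟨y, hwy, q, hq⟩ := Walk.not_nil_iff.1 hn
    have hcyc := hq ▸ hc'
    rw [Walk.cons_isCycle_iff] at hcyc
    obtain ⟨hqpath, hedge⟩ := hcyc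
    -- second endpoint step: decompose q.reverse
    have hyw : y ≠ w := hwy.ne'
    have hqrn : ¬ q.reverse.Nil := Walk.not_nil_of_ne (Ne.symm hyw)
    obtain ⟨y₂, hwy₂, q₂, hq₂⟩ := Walk.not_nil_iff.1 hqrn
    have hy₂ne : y₂ ≠ y := by
      rintro rfl
      have hq₂path : q₂.IsPath := by
        have := hqpath.reverse
        rw [hq₂] at this
        exact this.of_cons
      have : q₂ = Walk.nil := (Walk.isPath_iff_eq_nil (p := q₂)).1 hq₂path
      subst this
      apply hedge
      have : q = Walk.cons hwy₂.symm Walk.nil := by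
        have := congrArg Walk.reverse hq₂
        rwa [Walk.reverse_reverse, Walk.reverse_cons, Walk.reverse_nil, Walk.nil_append] at this
      rw [this]
      simp [Sym2.eq_swap]
    -- memberships
    have hymem : y ∈ c'.support := by
      rw [hq]; simp
    have hy₂mem : y₂ ∈ c'.support := by
      have : y₂ ∈ q.reverse.support := by rw [hq₂]; simp
      rw [Walk.support_reverse, List.mem_reverse] at this
      rw [hq]
      exact List.mem_of_mem_tail (by rw [Walk.support_cons, List.tail_cons]; exact this)
    -- both neighbors must be the parent of w
    have hpar : ∀ z, G.Adj w z → z ∈ c'.support → p w = z := by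
      intro z hadjz hzmem
      rcases (hadj w z).1 hadjz with ⟨_, h⟩ | ⟨hz, h⟩
      · exact h
      · exfalso
        have := hm z hz
        rw [h] at this
        exact absurd (hsupp z hzmem) (by omega)
    have e1 : p w = y := hpar y hwy hymem
    have e2 : p w = y₂ := hpar y₂ hwy₂ hy₂mem
    exact hy₂ne (e2 ▸ e1)

end ParentTree

section WExists
variable {X : Type*} [Finite X] {d : X → X → ℝ}
variable {Y : Type*} {ρ : Y → Y → ℝ} {T : SimpleGraph Y} {l : Y → ℝ} {Φ : X → Y}

lemma exists_w (hd : IsUltrametricOn d) (hρ : IsUltrametricOn ρ)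
    (hgen : GeneratedBy ρ T l) (hΦ : ∀ x y, ρ (Φ x) (Φ y) = d x y)
    {B : Set X} (hB : IsOpenBallOf d B) (hbad : ¬ IsCenteredSphereOf d B) :
    ∃ wB : Y, wB ∉ Set.range Φ ∧ (∀ x ∈ B, ρ wB (Φ x) = setDiam d B) ∧
      (∀ z, z ≠ wB → setDiam d B ≤ ρ wB z) ∧
      (∀ x, x ∉ B → ∀ b ∈ B, ρ wB (Φ x) = d x b) := by
  have hΦinj : Function.Injective Φ := by
    intro x y hxy
    have : d x y = 0 := by rw [← hΦ x y, hxy, (hρ.2.2.1 _ _).2 rfl]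
    exact (hd.2.2.1 x y).1 this
  obtain ⟨u, hu, v, hv, huv, hduv, hpos⟩ := bad_two hd hB hbad
  set r := setDiam d B with hrdef
  have hΦuv : Φ u ≠ Φ v := fun h => huv (hΦinj h)
  obtain ⟨wB, hlw, hρuw⟩ := exists_center hρ hgen hΦuv
  rw [hΦ u v, hduv] at hlw hρuw
  -- (P1)
  have hP1 : ∀ z, z ≠ wB → r ≤ ρ wB z := by
    intro z hz
    rw [← hlw]
    exact label_le_rho hgen (Ne.symm hz)
  -- upper bound on distances to points of B
  have hwle : ∀ x ∈ B, ρ wB (Φ x) ≤ r := by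
    intro x hx
    have h1 : ρ wB (Φ x) ≤ max (ρ wB (Φ u)) (ρ (Φ u) (Φ x)) := hρ.2.2.2 _ _ _
    have h2 : ρ wB (Φ u) ≤ r := by rw [hρ.2.1]; exact hρuw
    have h3 : ρ (Φ u) (Φ x) ≤ r := by rw [hΦ]; exact le_setDiam hd hu hx
    exact le_trans h1 (max_le h2 h3)
  -- w is not in the image of Φ
  have hwnot : wB ∉ Set.range Φ := by
    rintro ⟨x₀, rfl⟩
    apply hbad
    obtain ⟨c, s, hs, hBeq⟩ := hB
    have hdiamlt : r < s := setDiam_ball_lt hd hs hBeq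
    have hx₀B : x₀ ∈ B := by
      rw [hBeq]
      have h1 : d c x₀ ≤ max (d c u) (d u x₀) := hd.2.2.2 _ _ _
      have h2 : d c u < s := by have := hu; rwa [hBeq] at this
      have h3 : d u x₀ < s := by
        have : d u x₀ = ρ (Φ u) (Φ x₀) := (hΦ u x₀).symm
        rw [this]
        calc ρ (Φ u) (Φ x₀) ≤ r := hρuw
          _ < s := hdiamlt
      exact lt_of_le_of_lt h1 (max_lt h2 h3)
    have hsphere : ∀ x ∈ B, x ≠ x₀ → d x x₀ = r := by
      intro x hx hxx₀
      have h1 : ρ (Φ x₀) (Φ x) ≤ r := hwle x hx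
      have h2 : r ≤ ρ (Φ x₀) (Φ x) := hP1 (Φ x) (fun h => hxx₀ (hΦinj h.symm).symm)
      have : ρ (Φ x₀) (Φ x) = r := le_antisymm h1 h2
      rw [hΦ] at this
      rw [hd.2.1]; exact this
    refine ⟨x₀, hx₀B, r, le_of_lt hpos, ?_⟩
    ext x
    simp only [Set.mem_union, Set.mem_setOf_eq, Set.mem_singleton_iff]
    constructor
    · intro hx
      by_cases hxx₀ : x = x₀
      · right; exact hxx₀
      · left; exact hsphere x hx hxx₀
    · rintro (hx | rfl)
      · rw [hBeq]
        have h1 : d c x ≤ max (d c x₀) (d x₀ x) := hd.2.2.2 _ _ _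
        have h2 : d c x₀ < s := by have := hx₀B; rwa [hBeq] at this
        have h3 : d x₀ x < s := by rw [hd.2.1] at hx; rw [hx]; exact hdiamlt
        exact lt_of_le_of_lt h1 (max_lt h2 h3)
      · exact hx₀B
  -- exact distances inside B
  have hinside : ∀ x ∈ B, ρ wB (Φ x) = r := by
    intro x hx
    have h2 : r ≤ ρ wB (Φ x) := hP1 (Φ x) (fun h => hwnot ⟨x, h.symm ▸ rfl⟩)
    exact le_antisymm (hwle x hx) h2
  -- exact distances outside B
  have houtside : ∀ x, x ∉ B → ∀ b ∈ B, ρ wB (Φ x) = d x b := by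
    intro x hx b hb
    have hgt : r < d x u := outside_gt hd hB hx hu
    have hux : d u x = d x u := hd.2.1 u x
    have hle : ρ wB (Φ x) ≤ d x u := by
      have h1 : ρ wB (Φ x) ≤ max (ρ wB (Φ u)) (ρ (Φ u) (Φ x)) := hρ.2.2.2 _ _ _
      have h2 : ρ wB (Φ u) = r := hinside u hu
      have h3 : ρ (Φ u) (Φ x) = d x u := by rw [hΦ, hux]
      rw [h2, h3] at h1
      exact le_trans h1 (max_le (le_of_lt hgt) le_rfl)
    have hge : d x u ≤ ρ wB (Φ x) := by
      have h1 : d u x ≤ max (d u x) (0:ℝ) := le_max_left _ _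
      have h2 : ρ (Φ u) (Φ x) ≤ max (ρ (Φ u) wB) (ρ wB (Φ x)) := hρ.2.2.2 _ _ _
      rw [hΦ] at h2
      have h3 : ρ (Φ u) wB ≤ r := hρuw
      rw [hux] at h2
      by_contra hcon
      push_neg at hcon
      have : d x u ≤ max r (ρ wB (Φ x)) :=
        le_trans h2 (max_le_max h3 le_rfl)
      have : d x u < d x u := lt_of_le_of_lt this (max_lt hgt hcon)
      exact lt_irrefl _ this
    have : ρ wB (Φ x) = d x u := le_antisymm hle hge
    rw [this]
    exact outside_const hd hB hx hu hb
  exact ⟨wB, hwnot, hinside, hP1, houtside⟩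

end WExists

section MainLemma

open Set

lemma main_construction {X Y : Type*} [Finite X] [Nonempty X] {d : X → X → ℝ}
    (hd : IsUltrametricOn d) {ρ : Y → Y → ℝ} (hext : IsUGVLExtension d ρ) :
    ∃ Y₀ : Set Y,
      Y₀.ncard = {B : Set X | IsOpenBallOf d B ∧ ¬ IsCenteredSphereOf d B}.ncard + Nat.card X ∧
      IsUGVLExtension d (fun a b : Y₀ => ρ a b) := by
  classical
  obtain ⟨hρ, ⟨T, l, hgen⟩, ⟨Φ, hΦ⟩⟩ := hext
  haveI : Nonempty Y := ⟨Φ (Classical.arbitrary X)⟩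
  have hΦinj : Function.Injective Φ := by
    intro x y hxy
    have : d x y = 0 := by rw [← hΦ x y, hxy, (hρ.2.2.1 _ _).2 rfl]
    exact (hd.2.2.1 x y).1 this
  set Bad := {B : Set X | IsOpenBallOf d B ∧ ¬ IsCenteredSphereOf d B} with hBadDef
  -- choose the w-points
  have hwex : ∀ B : Set X, ∃ wB : Y, B ∈ Bad →
      (wB ∉ Set.range Φ ∧ (∀ x ∈ B, ρ wB (Φ x) = setDiam d B) ∧
      (∀ z, z ≠ wB → setDiam d B ≤ ρ wB z) ∧
      (∀ x, x ∉ B → ∀ b ∈ B, ρ wB (Φ x) = d x b)) := by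
    intro B
    by_cases hB : B ∈ Bad
    · obtain ⟨wB, h⟩ := exists_w hd hρ hgen hΦ hB.1 hB.2
      exact ⟨wB, fun _ => h⟩
    · exact ⟨Classical.arbitrary Y, fun h => absurd h hB⟩
  choose w hw using hwex
  have hw₁ : ∀ B (hB : B ∈ Bad), w B ∉ Set.range Φ := fun B hB => (hw B hB).1
  have hw₂ : ∀ B (hB : B ∈ Bad), ∀ x ∈ B, ρ (w B) (Φ x) = setDiam d B :=
    fun B hB => (hw B hB).2.1
  have hw₃ : ∀ B (hB : B ∈ Bad), ∀ z, z ≠ w B → setDiam d B ≤ ρ (w B) z :=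
    fun B hB => (hw B hB).2.2.1
  have hw₄ : ∀ B (hB : B ∈ Bad), ∀ x, x ∉ B → ∀ b ∈ B, ρ (w B) (Φ x) = d x b :=
    fun B hB => (hw B hB).2.2.2
  -- injectivity of w on Bad
  have hwinj : ∀ B ∈ Bad, ∀ B' ∈ Bad, w B = w B' → B = B' := by
    intro B hB B' hB' hww
    obtain ⟨b, hb⟩ := ball_nonempty hd hB.1
    obtain ⟨b', hb'⟩ := ball_nonempty hd hB'.1
    have hrr' : setDiam d B = setDiam d B' := by
      apply le_antisymm
      · have h1 : setDiam d B ≤ ρ (w B) (Φ b') := hw₃ B hB (Φ b') (fun h => hw₁ B hB ⟨_, h⟩)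
        rw [hww, hw₂ B' hB' b' hb'] at h1
        exact h1
      · have h1 : setDiam d B' ≤ ρ (w B') (Φ b) := hw₃ B' hB' (Φ b) (fun h => hw₁ B' hB' ⟨_, h⟩)
        rw [← hww, hw₂ B hB b hb] at h1
        exact h1
    ext x
    constructor
    · intro hx
      by_contra hx'
      have h1 : ρ (w B') (Φ x) = d x b' := hw₄ B' hB' x hx' b' hb'
      have h2 : setDiam d B' < d x b' := outside_gt hd hB'.1 hx' hb'
      have h3 : ρ (w B) (Φ x) = setDiam d B := hw₂ B hB x hx
      rw [hww, h1] at h3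
      rw [h3, hrr'] at h2
      exact lt_irrefl _ h2
    · intro hx
      by_contra hx'
      have h1 : ρ (w B) (Φ x) = d x b := hw₄ B hB x hx' b hb
      have h2 : setDiam d B < d x b := outside_gt hd hB.1 hx' hb
      have h3 : ρ (w B') (Φ x) = setDiam d B' := hw₂ B' hB' x hx
      rw [← hww, h1] at h3
      rw [h3, ← hrr'] at h2
      exact lt_irrefl _ h2
  set Y₀ : Set Y := Set.range Φ ∪ w '' Bad with hY₀def
  have hY₀fin : Y₀.Finite := (Set.finite_range Φ).union ((Set.toFinite Bad).image w)
  have hdisj : Disjoint (Set.range Φ) (w '' Bad) := by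
    rw [Set.disjoint_right]
    rintro y ⟨B, hB, rfl⟩ hy
    exact hw₁ B hB hy
  have hcard : Y₀.ncard = Bad.ncard + Nat.card X := by
    rw [hY₀def, Set.ncard_union_eq hdisj (Set.finite_range Φ) ((Set.toFinite Bad).image w)]
    have h1 : (Set.range Φ).ncard = Nat.card X := by
      rw [← Set.image_univ, Set.ncard_image_of_injective _ hΦinj, Set.ncard_univ]
    have h2 : (w '' Bad).ncard = Bad.ncard :=
      Set.ncard_image_of_injOn (fun B hB B' hB' => hwinj B hB B' hB')
    rw [h1, h2, Nat.add_comm]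
  refine ⟨Y₀, hcard, ?_⟩
  -- chosen centers for good balls
  have hctrex : ∀ B : Set X, ∃ c : X, (IsOpenBallOf d B ∧ IsCenteredSphereOf d B) →
      (c ∈ B ∧ ∀ x ∈ B, x ≠ c → d x c = setDiam d B) := by
    intro B
    by_cases h : IsOpenBallOf d B ∧ IsCenteredSphereOf d B
    · obtain ⟨c, hc, hcd⟩ := good_center hd h.1 h.2
      exact ⟨c, fun _ => ⟨hc, hcd⟩⟩
    · exact ⟨Classical.arbitrary X, fun h' => absurd h' h⟩
  choose ctr hctr using hctrex
  -- the ball represented by a point of X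
  set P : Set X → X → Prop :=
    fun B x => IsOpenBallOf d B ∧ IsCenteredSphereOf d B ∧ ctr B = x ∧ B ≠ {x} with hPdef
  have hPuniq : ∀ x B B', P B x → P B' x → B = B' := by
    intro x B B' hPB hPB'
    have key : ∀ C C' : Set X, P C x → P C' x → C ⊆ C' → C = C' := by
      intro C C' hPC hPC' hss
      by_contra hne
      have hC'good := hctr C' ⟨hPC'.1, hPC'.2.1⟩
      have hxC : x ∈ C := by have := (hctr C ⟨hPC.1, hPC.2.1⟩).1; rwa [hPC.2.2.1] at this
      have hxC' : x ∈ C' := by have := hC'good.1; rwa [hPC'.2.2.1] at this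
      have hdd : setDiam d C < setDiam d C' :=
        ssubset_setDiam_lt hd hPC.1 hPC'.1 ⟨hss, fun h => hne (le_antisymm hss h)⟩
      obtain ⟨y, hy, hyx⟩ : ∃ y ∈ C, y ≠ x := by
        by_contra hcon
        push_neg at hcon
        apply hPC.2.2.2
        ext z
        simp only [Set.mem_singleton_iff]
        exact ⟨fun hz => hcon z hz, fun hz => hz ▸ hxC⟩
      have h1 : d y x = setDiam d C' := by
        have := hC'good.2 y (hss hy) (by rw [hPC'.2.2.1]; exact hyx)
        rwa [hPC'.2.2.1] at this
      have h2 : d y x ≤ setDiam d C := le_setDiam hd hy hxC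
      rw [h1] at h2
      exact absurd h2 (not_le.2 hdd)
    have hxB : x ∈ B := by have := (hctr B ⟨hPB.1, hPB.2.1⟩).1; rwa [hPB.2.2.1] at this
    have hxB' : x ∈ B' := by have := (hctr B' ⟨hPB'.1, hPB'.2.1⟩).1; rwa [hPB'.2.2.1] at this
    rcases balls_nested hd hPB.1 hPB'.1 ⟨x, hxB, hxB'⟩ with h | h
    · exact key B B' hPB hPB' h
    · exact (key B' B hPB' hPB h).symm
  have hβex : ∀ x : X, ∃ A : Set X, ((∃ B, P B x) → P A x) ∧ ((¬ ∃ B, P B x) → A = {x}) := by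
    intro x
    by_cases h : ∃ B, P B x
    · exact ⟨h.choose, fun _ => h.choose_spec, fun h' => absurd h h'⟩
    · exact ⟨{x}, fun h' => absurd h' h, fun _ => rfl⟩
  choose β hβP hβsing using hβex
  have hβcases : ∀ x : X, β x = {x} ∨ P (β x) x := by
    intro x
    by_cases h : ∃ B, P B x
    · exact Or.inr (hβP x h)
    · exact Or.inl (hβsing x h)
  have hβmem : ∀ x : X, x ∈ β x := by
    intro x
    rcases hβcases x with h | h
    · rw [h]; exact rfl
    · have := (hctr (β x) ⟨h.1, h.2.1⟩).1; rwa [h.2.2.1] at this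
  have hβball : ∀ x : X, IsOpenBallOf d (β x) := by
    intro x
    rcases hβcases x with h | h
    · rw [h]; exact singleton_isBall hd x
    · exact h.1
  have hβctr : ∀ x : X, ∀ y ∈ β x, y ≠ x → d y x = setDiam d (β x) := by
    intro x y hy hyx
    rcases hβcases x with h | h
    · rw [h] at hy; exact absurd hy hyx
    · have := (hctr (β x) ⟨h.1, h.2.1⟩).2 y hy (by rw [h.2.2.1]; exact hyx)
      rwa [h.2.2.1] at this
  have hβgood : ∀ x : X, β x ∉ Bad := by
    intro x
    rcases hβcases x with h | h
    · rw [h]; exact fun hb => hb.2 (singleton_isCenteredSphere hd x)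
    · exact fun hb => hb.2 h.2.1
  have hβinj : Function.Injective β := by
    intro x x' hxx'
    rcases hβcases x with h | h <;> rcases hβcases x' with h' | h'
    · rw [h, h'] at hxx'; exact Set.singleton_eq_singleton_iff.1 hxx'
    · -- β x = {x}, P (β x') x'
      exfalso
      have : x' ∈ β x' := hβmem x'
      rw [← hxx', h] at this
      rw [Set.mem_singleton_iff] at this
      subst this
      exact h'.2.2.2 (hxx' ▸ h)
    · exfalso
      have : x ∈ β x := hβmem x
      rw [hxx', h'] at this
      rw [Set.mem_singleton_iff] at this
      subst this
      exact h.2.2.2 (hxx'.symm ▸ h')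
    · rw [← h.2.2.1, ← h'.2.2.1, hxx']
  -- the ball attached to each vertex of the subspace
  have hbzex : ∀ z : Y₀, ∃ A : Set X, IsOpenBallOf d A ∧
      (∀ x : X, Φ x = (z : Y) → A = β x) ∧ (∀ B ∈ Bad, w B = (z : Y) → A = B) := by
    rintro ⟨z, hz⟩
    rcases hz with ⟨x, rfl⟩ | ⟨B, hB, rfl⟩
    · refine ⟨β x, hβball x, ?_, ?_⟩
      · intro x' hx'; rw [hΦinj hx']
      · intro B hB hwB
        exact absurd ⟨x, hwB.symm⟩ (hw₁ B hB)
    · refine ⟨B, hB.1, ?_, ?_⟩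
      · intro x hx
        exact absurd ⟨x, hx⟩ (hw₁ B hB)
      · intro B' hB' hww
        exact (hwinj B' hB' B hB hww).symm
  choose bz hbzball hbzΦ hbzw using hbzex
  have hbz_cases : ∀ z : Y₀, (∃ x, Φ x = (z : Y) ∧ bz z = β x) ∨
      (∃ B, B ∈ Bad ∧ w B = (z : Y) ∧ bz z = B) := by
    rintro ⟨z, hz⟩
    rcases hz with ⟨x, rfl⟩ | ⟨B, hB, rfl⟩
    · exact Or.inl ⟨x, rfl, hbzΦ _ x rfl⟩
    · exact Or.inr ⟨B, hB, rfl, hbzw _ B hB rfl⟩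
  have hbzne : ∀ z : Y₀, (bz z).Nonempty := fun z => ball_nonempty hd (hbzball z)
  have hbz_inj : ∀ z z' : Y₀, bz z = bz z' → z = z' := by
    intro z z' he
    rcases hbz_cases z with ⟨x, hx, hbx⟩ | ⟨B, hB, hwB, hbB⟩ <;>
      rcases hbz_cases z' with ⟨x', hx', hbx'⟩ | ⟨B', hB', hwB', hbB'⟩
    · rw [hbx, hbx'] at he
      apply Subtype.ext; rw [← hx, ← hx', hβinj he]
    · exfalso; rw [hbx, hbB'] at he; exact hβgood x (by rw [he]; exact hB')
    · exfalso; rw [hbB, hbx'] at he; exact hβgood x' (by rw [← he]; exact hB)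
    · rw [hbB, hbB'] at he
      apply Subtype.ext; rw [← hwB, ← hwB', he]
  -- (Ka) distance from a vertex to interior points of its ball
  have hKa : ∀ (z : Y₀) (x : X), x ∈ bz z → Φ x ≠ (z : Y) →
      ρ (z : Y) (Φ x) = setDiam d (bz z) := by
    intro z x hx hne
    rcases hbz_cases z with ⟨x₀, hx₀, hbx⟩ | ⟨B, hB, hwB, hbB⟩
    · rw [← hx₀]
      rw [hΦ]
      have hxx₀ : x ≠ x₀ := fun h => hne (h ▸ hx₀)
      rw [hbx] at hx ⊢
      rw [hd.2.1]
      exact hβctr x₀ x hx hxx₀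
    · rw [hbB] at hx ⊢
      rw [← hwB]
      exact hw₂ B hB x hx
  -- (Kb) a point of the ball close to the vertex
  have hKb : ∀ z : Y₀, ∃ u ∈ bz z, ρ (z : Y) (Φ u) ≤ setDiam d (bz z) := by
    intro z
    rcases hbz_cases z with ⟨x₀, hx₀, hbx⟩ | ⟨B, hB, hwB, hbB⟩
    · refine ⟨x₀, by rw [hbx]; exact hβmem x₀, ?_⟩
      rw [← hx₀, hΦ, (hd.2.2.1 x₀ x₀).2 rfl]
      exact setDiam_nonneg hd (hbzne z)
    · obtain ⟨b, hb⟩ := ball_nonempty hd hB.1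
      refine ⟨b, by rw [hbB]; exact hb, ?_⟩
      rw [← hwB, hbB]
      exact le_of_eq (hw₂ B hB b hb)
  -- (Kc) distances to outside points
  have hKc : ∀ (z : Y₀) (x : X), x ∉ bz z → ∀ b ∈ bz z, ρ (z : Y) (Φ x) = d x b := by
    intro z x hx b hb
    rcases hbz_cases z with ⟨x₀, hx₀, hbx⟩ | ⟨B, hB, hwB, hbB⟩
    · rw [← hx₀, hΦ]
      rw [hbx] at hx hb
      have h1 : d x x₀ = d x b := outside_const hd (hβball x₀) hx (hβmem x₀) hb
      rw [hd.2.1, h1]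
    · rw [← hwB]
      rw [hbB] at hx hb
      exact hw₄ B hB x hx b hb
  -- (Ke) the center of a larger ball is not in a smaller one
  have hKe : ∀ (z z' : Y₀), bz z ⊂ bz z' → ∀ u ∈ bz z, Φ u ≠ (z' : Y) := by
    intro z z' hss u hu hequ
    rcases hbz_cases z' with ⟨x', hx', hbx'⟩ | ⟨B', hB', hwB', hbB'⟩
    · -- z' = Φ x', bz z' = β x'
      have hux' : u = x' := hΦinj (hequ.trans hx'.symm)
      subst hux'
      -- u ∈ bz z and bz z ⊂ β u : show bz z = {u} and derive a contradiction
      have hzsing : bz z = {u} := by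
        ext y
        simp only [Set.mem_singleton_iff]
        constructor
        · intro hy
          by_contra hyu
          have h1 : d y u = setDiam d (β u) := hβctr u y (hbx' ▸ hss.1 hy) hyu
          have h2 : d y u ≤ setDiam d (bz z) := le_setDiam hd hy hu
          have h3 : setDiam d (bz z) < setDiam d (β u) := by
            rw [← hbx']
            exact ssubset_setDiam_lt hd (hbzball z) (hbzball z') hss
          rw [h1] at h2
          exact absurd h2 (not_le.2 h3)
        · rintro rfl; exact hu
      rcases hbz_cases z with ⟨x₁, hx₁, hbx₁⟩ | ⟨B, hB, hwB, hbB⟩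
      · have hx₁u : x₁ = u := by
          have hmm : x₁ ∈ bz z := by rw [hbx₁]; exact hβmem x₁
          rw [hzsing] at hmm; exact hmm
        have h1 : bz z' = bz z := by rw [hbx', ← hx₁u, ← hbx₁]
        exact (HasSSubset.SSubset.ne hss) h1.symm
      · rw [hbB] at hzsing
        rw [hzsing] at hB
        exact hB.2 (singleton_isCenteredSphere hd u)
    · exact hw₁ B' hB' ⟨u, hequ.trans hwB'.symm⟩
  -- least ball containing two given balls
  have hlcaex : ∀ A A' : Set X, ∃ L : Set X,
      IsOpenBallOf d A → IsOpenBallOf d A' →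
      (IsOpenBallOf d L ∧ A ⊆ L ∧ A' ⊆ L ∧
        ∀ C, IsOpenBallOf d C → A ⊆ C → A' ⊆ C → L ⊆ C) := by
    intro A A'
    by_cases h : IsOpenBallOf d A ∧ IsOpenBallOf d A'
    · set S := {C : Set X | IsOpenBallOf d C ∧ A ⊆ C ∧ A' ⊆ C} with hSdef
      have hSne : S.Nonempty := ⟨Set.univ, univ_isBall hd, Set.subset_univ _, Set.subset_univ _⟩
      obtain ⟨L, hLS, hLmin⟩ := Set.Finite.exists_minimalFor id S (Set.toFinite S) hSne
      refine ⟨L, fun _ _ => ⟨hLS.1, hLS.2.1, hLS.2.2, ?_⟩⟩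
      intro C hC hAC hA'C
      have hCS : C ∈ S := ⟨hC, hAC, hA'C⟩
      obtain ⟨a, ha⟩ := ball_nonempty hd h.1
      rcases balls_nested hd hLS.1 hC ⟨a, hLS.2.1 ha, hAC ha⟩ with hsub | hsub
      · exact hsub
      · exact hLmin hCS hsub
    · exact ⟨Set.univ, fun h1 h2 => absurd ⟨h1, h2⟩ h⟩
  choose lca hlca using hlcaex
  -- least ball strictly containing a given ball
  have hparex : ∀ A : Set X, ∃ Pr : Set X,
      IsOpenBallOf d A → A ≠ Set.univ →
      (IsOpenBallOf d Pr ∧ A ⊂ Pr ∧ ∀ C, IsOpenBallOf d C → A ⊂ C → Pr ⊆ C) := by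
    intro A
    by_cases h : IsOpenBallOf d A ∧ A ≠ Set.univ
    · set S := {C : Set X | IsOpenBallOf d C ∧ A ⊂ C} with hSdef
      have hSne : S.Nonempty :=
        ⟨Set.univ, univ_isBall hd, ⟨Set.subset_univ _, fun hc => h.2 (le_antisymm (Set.subset_univ _) hc)⟩⟩
      obtain ⟨Pr, hPS, hPmin⟩ := Set.Finite.exists_minimalFor id S (Set.toFinite S) hSne
      refine ⟨Pr, fun _ _ => ⟨hPS.1, hPS.2, ?_⟩⟩
      intro C hC hAC
      have hCS : C ∈ S := ⟨hC, hAC⟩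
      obtain ⟨a, ha⟩ := ball_nonempty hd h.1
      rcases balls_nested hd hPS.1 hC ⟨a, hPS.2.1 ha, hAC.1 ha⟩ with hsub | hsub
      · exact hsub
      · exact hPmin hCS hsub
    · exact ⟨Set.univ, fun h1 h2 => absurd ⟨h1, h2⟩ h⟩
  choose par hpar using hparex
  -- every ball with at least two points is attached to some vertex
  have hrange : ∀ C : Set X, IsOpenBallOf d C → (∃ a ∈ C, ∃ b ∈ C, a ≠ b) →
      ∃ z : Y₀, bz z = C := by
    rintro C hC ⟨a, ha, b, hb, hab⟩
    by_cases hcent : IsCenteredSphereOf d C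
    · have hgc := hctr C ⟨hC, hcent⟩
      have hCne : C ≠ {ctr C} := by
        intro hCeq
        rw [hCeq] at ha hb
        rw [Set.mem_singleton_iff] at ha hb
        exact hab (ha.trans hb.symm)
      have hPC : P C (ctr C) := ⟨hC, hcent, rfl, hCne⟩
      have hβc : β (ctr C) = C := hPuniq (ctr C) (β (ctr C)) C (hβP (ctr C) ⟨C, hPC⟩) hPC
      refine ⟨⟨Φ (ctr C), Or.inl ⟨ctr C, rfl⟩⟩, ?_⟩
      rw [hbzΦ _ (ctr C) rfl, hβc]
    · have hCbad : C ∈ Bad := ⟨hC, hcent⟩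
      exact ⟨⟨w C, Or.inr ⟨C, hCbad, rfl⟩⟩, hbzw _ C hCbad rfl⟩
  -- the root vertex
  have hroot : ∃ z₀ : Y₀, bz z₀ = Set.univ := by
    by_cases h2 : ∃ a b : X, a ≠ b
    · obtain ⟨a, b, hab⟩ := h2
      exact hrange Set.univ (univ_isBall hd) ⟨a, trivial, b, trivial, hab⟩
    · push_neg at h2
      obtain ⟨x₀⟩ := ‹Nonempty X›
      have huniv : (Set.univ : Set X) = {x₀} := by
        ext y; simp [h2 y x₀]
      have hβx₀ : β x₀ = {x₀} := by
        rcases hβcases x₀ with h | h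
        · exact h
        · exfalso
          apply h.2.2.2
          apply subset_antisymm
          · rw [← huniv]; exact Set.subset_univ _
          · intro y hy; rw [Set.mem_singleton_iff] at hy; rw [hy]; exact hβmem x₀
      refine ⟨⟨Φ x₀, Or.inl ⟨x₀, rfl⟩⟩, ?_⟩
      rw [hbzΦ _ x₀ rfl, hβx₀]
      exact huniv.symm
  obtain ⟨root, hroot⟩ := hroot
  -- the key metric computation, nested case
  have hkey : ∀ zs zt : Y₀, bz zs ⊂ bz zt → ρ (zs:Y) (zt:Y) = setDiam d (bz zt) := by
    intro zs zt hss
    obtain ⟨u, hu, huρ⟩ := hKb zs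
    have hΦuzt : Φ u ≠ (zt : Y) := hKe zs zt hss u hu
    have hKau : ρ (zt:Y) (Φ u) = setDiam d (bz zt) := hKa zt u (hss.1 hu) hΦuzt
    have hdd : setDiam d (bz zs) < setDiam d (bz zt) :=
      ssubset_setDiam_lt hd (hbzball zs) (hbzball zt) hss
    by_cases hz : Φ u = (zs : Y)
    · rw [← hz, hρ.2.1 (Φ u) (zt:Y)]
      exact hKau
    · apply le_antisymm
      · have h1 : ρ (zs:Y) (zt:Y) ≤ max (ρ (zs:Y) (Φ u)) (ρ (Φ u) (zt:Y)) := hρ.2.2.2 _ _ _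
        have h2 : ρ (Φ u) (zt:Y) = setDiam d (bz zt) := by rw [hρ.2.1]; exact hKau
        rw [h2] at h1
        exact le_trans h1 (max_le (le_trans huρ (le_of_lt hdd)) le_rfl)
      · have h1 : ρ (zt:Y) (Φ u) ≤ max (ρ (zt:Y) (zs:Y)) (ρ (zs:Y) (Φ u)) := hρ.2.2.2 _ _ _
        rw [hKau] at h1
        have h3 : ρ (zs:Y) (Φ u) < setDiam d (bz zt) := lt_of_le_of_lt huρ hdd
        rw [hρ.2.1 (zs:Y) (zt:Y)]
        rcases max_cases (ρ (zt:Y) (zs:Y)) (ρ (zs:Y) (Φ u)) with ⟨he, _⟩ | ⟨he, hle⟩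
        · rw [he] at h1; exact h1
        · exfalso; rw [he] at h1; linarith
  -- the full metric computation
  have hmetric : ∀ zs zt : Y₀, zs ≠ zt →
      ρ (zs:Y) (zt:Y) = setDiam d (lca (bz zs) (bz zt)) := by
    intro zs zt hne
    have hL := hlca (bz zs) (bz zt) (hbzball zs) (hbzball zt)
    obtain ⟨hLball, hLs, hLt, hLmin⟩ := hL
    have hbzne' : bz zs ≠ bz zt := fun h => hne (hbz_inj _ _ h)
    by_cases hint : (bz zs ∩ bz zt).Nonempty
    · rcases balls_nested hd (hbzball zs) (hbzball zt) hint with hsub | hsub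
      · have hss : bz zs ⊂ bz zt := ⟨hsub, fun h => hbzne' (le_antisymm hsub h)⟩
        have hLeq : lca (bz zs) (bz zt) = bz zt :=
          le_antisymm (hLmin (bz zt) (hbzball zt) hsub (le_refl _)) hLt
        rw [hLeq]
        exact hkey zs zt hss
      · have hss : bz zt ⊂ bz zs := ⟨hsub, fun h => hbzne' (le_antisymm h hsub)⟩
        have hLeq : lca (bz zs) (bz zt) = bz zs :=
          le_antisymm (hLmin (bz zs) (hbzball zs) (le_refl _) hsub) hLs
        rw [hLeq, hρ.2.1]
        exact hkey zt zs hss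
    · -- disjoint balls
      obtain ⟨u, hu, huρ⟩ := hKb zs
      obtain ⟨u', hu', hu'ρ⟩ := hKb zt
      have huzt : u ∉ bz zt := fun h => hint ⟨u, hu, h⟩
      have hu'zs : u' ∉ bz zs := fun h => hint ⟨u', h, hu'⟩
      set t := d u u' with htdef
      have h2 : setDiam d (bz zt) < t := outside_gt hd (hbzball zt) huzt hu'
      have h1 : setDiam d (bz zs) < t := by
        have := outside_gt hd (hbzball zs) hu'zs hu
        rwa [hd.2.1 u' u] at this
      have hΦt : ρ (Φ u) (Φ u') = t := hΦ u u'
      have hup : ρ (zs:Y) (zt:Y) ≤ t := by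
        have e1 : ρ (zs:Y) (zt:Y) ≤ max (ρ (zs:Y) (Φ u)) (ρ (Φ u) (zt:Y)) := hρ.2.2.2 _ _ _
        have e2 : ρ (Φ u) (zt:Y) ≤ max (ρ (Φ u) (Φ u')) (ρ (Φ u') (zt:Y)) := hρ.2.2.2 _ _ _
        have e3 : ρ (Φ u') (zt:Y) ≤ setDiam d (bz zt) := by rw [hρ.2.1]; exact hu'ρ
        have e4 : ρ (Φ u) (zt:Y) ≤ t :=
          le_trans e2 (max_le (le_of_eq hΦt) (le_trans e3 (le_of_lt h2)))
        exact le_trans e1 (max_le (le_trans huρ (le_of_lt h1)) e4)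
      have hdown : t ≤ ρ (zs:Y) (zt:Y) := by
        have e1 : ρ (Φ u) (Φ u') ≤ max (ρ (Φ u) (zs:Y)) (ρ (zs:Y) (Φ u')) := hρ.2.2.2 _ _ _
        have e2 : ρ (Φ u) (zs:Y) ≤ setDiam d (bz zs) := by rw [hρ.2.1]; exact huρ
        have e5 : t ≤ ρ (zs:Y) (Φ u') := by
          rw [hΦt] at e1
          rcases max_cases (ρ (Φ u) (zs:Y)) (ρ (zs:Y) (Φ u')) with ⟨he, _⟩ | ⟨he, _⟩
          · exfalso; rw [he] at e1; linarith
          · rw [he] at e1; exact e1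
        have e3 : ρ (zs:Y) (Φ u') ≤ max (ρ (zs:Y) (zt:Y)) (ρ (zt:Y) (Φ u')) := hρ.2.2.2 _ _ _
        have e4 : ρ (zt:Y) (Φ u') ≤ setDiam d (bz zt) := hu'ρ
        rcases max_cases (ρ (zs:Y) (zt:Y)) (ρ (zt:Y) (Φ u')) with ⟨he, _⟩ | ⟨he, _⟩
        · rw [he] at e3; exact le_trans e5 e3
        · exfalso
          rw [he] at e3
          have := le_trans e5 (le_trans e3 e4)
          linarith
      have hρt : ρ (zs:Y) (zt:Y) = t := le_antisymm hup hdown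
      -- the diameter of the lca equals t
      have hge : t ≤ setDiam d (lca (bz zs) (bz zt)) := le_setDiam hd (hLs hu) (hLt hu')
      have hle2 : setDiam d (lca (bz zs) (bz zt)) ≤ t := by
        have ht0 : (0:ℝ) ≤ t := hd.1 u u'
        have hCball : IsOpenBallOf d {y | d u y ≤ t} := cball_isBall hd u ht0
        have hsub1 : bz zs ⊆ {y | d u y ≤ t} := by
          intro y hy
          have : d u y ≤ setDiam d (bz zs) := le_setDiam hd hu hy
          exact le_trans this (le_of_lt h1)
        have hsub2 : bz zt ⊆ {y | d u y ≤ t} := by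
          intro y hy
          have e1 : d u y ≤ max (d u u') (d u' y) := hd.2.2.2 _ _ _
          have e2 : d u' y ≤ setDiam d (bz zt) := le_setDiam hd hu' hy
          exact le_trans e1 (max_le le_rfl (le_trans e2 (le_of_lt h2)))
        have hLC : lca (bz zs) (bz zt) ⊆ {y | d u y ≤ t} := hLmin _ hCball hsub1 hsub2
        obtain ⟨p, hp, q, hq, hpq⟩ := setDiam_attained (ball_nonempty hd hLball)
        rw [hpq]
        have hpC : d u p ≤ t := hLC hp
        have hqC : d u q ≤ t := hLC hq
        have e1 : d p q ≤ max (d p u) (d u q) := hd.2.2.2 _ _ _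
        rw [hd.2.1 p u] at e1
        exact le_trans e1 (max_le hpC hqC)
      rw [hρt]
      exact le_antisymm hge hle2
  -- parent vertex map
  haveI : Fintype ↥Y₀ := hY₀fin.fintype
  have hpzex : ∀ z : Y₀, ∃ z' : Y₀,
      (bz z ≠ Set.univ → bz z' = par (bz z)) ∧ (bz z = Set.univ → z' = z) := by
    intro z
    by_cases h : bz z = Set.univ
    · exact ⟨z, fun h' => absurd h h', fun _ => rfl⟩
    · obtain ⟨hPball, hPss, _⟩ := hpar (bz z) (hbzball z) h
      obtain ⟨p, hp, hpnot⟩ := Set.exists_of_ssubset hPss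
      obtain ⟨b, hb⟩ := hbzne z
      obtain ⟨z', hz'⟩ := hrange (par (bz z)) hPball
        ⟨p, hp, b, hPss.1 hb, fun hpb => hpnot (hpb ▸ hb)⟩
      exact ⟨z', fun _ => hz', fun h' => absurd h' h⟩
  choose pz hpz₁ hpz₂ using hpzex
  set m : Y₀ → ℕ := fun z => (bz z).ncard with hmdef
  have hznroot : ∀ z : Y₀, z ≠ root → bz z ≠ Set.univ := by
    intro z hz h
    exact hz (hbz_inj z root (h.trans hroot.symm))
  have hm : ∀ z : Y₀, z ≠ root → m z < m (pz z) := by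
    intro z hz
    have h := hznroot z hz
    have hP := (hpar (bz z) (hbzball z) h).2.1
    have hss : bz z ⊂ bz (pz z) := by rw [hpz₁ z h]; exact hP
    exact Set.ncard_lt_ncard hss (Set.toFinite _)
  have hmr : ∀ z : Y₀, m z ≤ m root := by
    intro z
    apply Set.ncard_le_ncard _ (Set.toFinite _)
    rw [hroot]; exact Set.subset_univ _
  set G : SimpleGraph Y₀ :=
    { Adj := fun z z' => (z ≠ root ∧ pz z = z') ∨ (z' ≠ root ∧ pz z' = z)
      symm := ⟨fun z z' h => Or.symm h⟩
      loopless := by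
        constructor
        intro z h
        rcases h with ⟨hz, hpz⟩ | ⟨hz, hpz⟩ <;>
          · have := hm z hz; rw [hpz] at this; omega } with hGdef
  have hGtree : G.IsTree := isTree_of_parent root pz m hm hmr G (fun z z' => Iff.rfl)
  -- up-paths
  have hup : ∀ n : ℕ, ∀ z zt : Y₀, bz z ⊆ bz zt → (bz zt).ncard - (bz z).ncard ≤ n →
      ∃ p : G.Walk z zt, p.IsPath ∧ ∀ y ∈ p.support, bz z ⊆ bz y ∧ bz y ⊆ bz zt := by
    intro n
    induction n with
    | zero =>
      intro z zt hsub hcard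
      have hmon := Set.ncard_le_ncard hsub (Set.toFinite _)
      have heq : bz z = bz zt := Set.eq_of_subset_of_ncard_le hsub (by omega) (Set.toFinite _)
      have hz : z = zt := hbz_inj _ _ heq
      subst hz
      refine ⟨SimpleGraph.Walk.nil, SimpleGraph.Walk.IsPath.nil, ?_⟩
      intro y hy
      rw [SimpleGraph.Walk.support_nil, List.mem_singleton] at hy
      subst hy
      exact ⟨le_refl _, hsub⟩
    | succ k ih =>
      intro z zt hsub hcard
      by_cases heq : z = zt
      · subst heq
        refine ⟨SimpleGraph.Walk.nil, SimpleGraph.Walk.IsPath.nil, ?_⟩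
        intro y hy
        rw [SimpleGraph.Walk.support_nil, List.mem_singleton] at hy
        subst hy
        exact ⟨le_refl _, hsub⟩
      · have hne : bz z ≠ bz zt := fun h => heq (hbz_inj _ _ h)
        have hss : bz z ⊂ bz zt := ⟨hsub, fun h => hne (le_antisymm hsub h)⟩
        have hzuniv : bz z ≠ Set.univ := by
          intro h
          exact hss.2 (by rw [h]; exact Set.subset_univ _)
        have hzr : z ≠ root := by
          intro h
          apply hzuniv
          rw [h, hroot]
        obtain ⟨hPball, hPss, hPmin⟩ := hpar (bz z) (hbzball z) hzuniv
        have hpzb : bz (pz z) = par (bz z) := hpz₁ z hzuniv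
        have hPsubt : par (bz z) ⊆ bz zt := hPmin (bz zt) (hbzball zt) hss
        have hzsubpz : bz z ⊆ bz (pz z) := by rw [hpzb]; exact hPss.1
        have hcard2 : (bz zt).ncard - (bz (pz z)).ncard ≤ k := by
          have c1 : (bz z).ncard < (bz (pz z)).ncard :=
            Set.ncard_lt_ncard (by rw [hpzb]; exact hPss) (Set.toFinite _)
          have c2 : (bz (pz z)).ncard ≤ (bz zt).ncard :=
            Set.ncard_le_ncard (by rw [hpzb]; exact hPsubt) (Set.toFinite _)
          omega
        obtain ⟨q, hq, hqsupp⟩ := ih (pz z) zt (by rw [hpzb]; exact hPsubt) hcard2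
        have hadjz : G.Adj z (pz z) := Or.inl ⟨hzr, rfl⟩
        refine ⟨SimpleGraph.Walk.cons hadjz q, ?_, ?_⟩
        · apply hq.cons
          intro hzq
          have h1 := (hqsupp z hzq).1
          rw [hpzb] at h1
          exact hPss.2 h1
        · intro y hy
          rw [SimpleGraph.Walk.support_cons] at hy
          rcases List.mem_cons.1 hy with rfl | hy'
          · exact ⟨le_refl _, hsub⟩
          · obtain ⟨h1, h2⟩ := hqsupp y hy'
            exact ⟨le_trans hzsubpz h1, h2⟩
  -- the subspace metric is generated by the labeled tree G
  have hgen' : GeneratedBy (fun a b : Y₀ => ρ a b) G (fun z => setDiam d (bz z)) := by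
    refine ⟨hGtree, fun z => setDiam_nonneg hd (hbzne z), fun z => (hρ.2.2.1 _ _).2 rfl, ?_⟩
    intro u v huv p hp
    obtain ⟨hLball, hLu, hLv, hLleast⟩ := hlca (bz u) (bz v) (hbzball u) (hbzball v)
    set L := lca (bz u) (bz v) with hLdef
    have hLvert : ∃ zl : Y₀, bz zl = L := by
      apply hrange L hLball
      by_contra hcon
      push_neg at hcon
      obtain ⟨a, ha⟩ := hbzne u
      have hLa : ∀ y ∈ L, y = a := fun y hy => hcon y hy a (hLu ha)
      have h1 : bz u = bz v := by
        apply subset_antisymm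
        · intro y hy
          have := hLa y (hLu hy)
          subst this
          obtain ⟨b, hb⟩ := hbzne v
          have := hLa b (hLv hb)
          subst this
          exact hb
        · intro y hy
          have := hLa y (hLv hy)
          subst this
          exact ha
      exact huv (hbz_inj _ _ h1)
    obtain ⟨zl, hzl⟩ := hLvert
    obtain ⟨pu, hpu, hpusupp⟩ := hup ((bz zl).ncard) u zl (by rw [hzl]; exact hLu) (by omega)
    obtain ⟨pv, hpv, hpvsupp⟩ := hup ((bz zl).ncard) v zl (by rw [hzl]; exact hLv) (by omega)
    set canon : G.Walk u v := pu.append pv.reverse with hcanondef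
    have hmemrev : ∀ y, y ∈ pv.reverse.support → y ∈ pv.support := by
      intro y hy
      rwa [SimpleGraph.Walk.support_reverse, List.mem_reverse] at hy
    have hcanonPath : canon.IsPath := by
      rw [SimpleGraph.Walk.isPath_def, SimpleGraph.Walk.support_append]
      apply List.Nodup.append hpu.support_nodup (hpv.reverse.support_nodup.tail)
      intro y hy1 hy2
      have hy2' : y ∈ pv.support := hmemrev y (List.mem_of_mem_tail hy2)
      have hbu := hpusupp y hy1
      have hbv := hpvsupp y hy2'
      have hyL : bz y = L := by
        apply subset_antisymm
        · rw [← hzl]; exact hbu.2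
        · exact hLleast (bz y) (hbzball y) hbu.1 hbv.1
      have hyzl : y = zl := hbz_inj _ _ (hyL.trans hzl.symm)
      subst hyzl
      -- but y = zl is the head of pv.reverse.support, contradicting nodup tail membership
      have hnodup := hpv.reverse.support_nodup
      rw [SimpleGraph.Walk.support_eq_cons] at hnodup
      exact (List.nodup_cons.1 hnodup).1 hy2
    have hwm : walkMax (fun z => setDiam d (bz z)) canon = setDiam d L := by
      apply le_antisymm
      · apply walkMax_le (setDiam_nonneg hd (ball_nonempty hd hLball))
        intro y hy
        rw [SimpleGraph.Walk.support_append, List.mem_append] at hy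
        have hsubL : bz y ⊆ L := by
          rcases hy with hy | hy
          · rw [← hzl]; exact (hpusupp y hy).2
          · rw [← hzl]; exact (hpvsupp y (hmemrev y (List.mem_of_mem_tail hy))).2
        exact setDiam_mono (hbzne y) hsubL
      · have hzlmem : zl ∈ canon.support := by
          rw [SimpleGraph.Walk.support_append, List.mem_append]
          exact Or.inl pu.end_mem_support
        have h2 : setDiam d (bz zl) ≤ walkMax (fun z => setDiam d (bz z)) canon :=
          le_walkMax (l := fun z => setDiam d (bz z)) hzlmem
        rw [hzl] at h2
        exact h2
    have hpcanon : p = canon := by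
      have h1 := hGtree.IsAcyclic.path_unique ⟨p, hp⟩ ⟨canon, hcanonPath⟩
      exact Subtype.mk_eq_mk.1 h1
    rw [hpcanon, hwm]
    exact hmetric u v huv
  -- final assembly
  refine ⟨?_, ⟨G, fun z => setDiam d (bz z), hgen'⟩,
    ⟨fun x => ⟨Φ x, Or.inl ⟨x, rfl⟩⟩, fun x y => hΦ x y⟩⟩
  exact ⟨fun a b => hρ.1 a b, fun a b => hρ.2.1 a b,
    fun a b => ⟨fun h => Subtype.ext ((hρ.2.2.1 (a:Y) (b:Y)).1 h),
      fun h => (hρ.2.2.1 (a:Y) (b:Y)).2 (by rw [h])⟩,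
    fun a b c => hρ.2.2.2 a b c⟩

end MainLemma

/-- An UGVL-extension `(Y, ρ)` of a finite nonempty ultrametric space `(X, d)` is
minimal iff `card Y = Δ(X, d) + card X`, where `Δ(X, d)` is the number of open balls
of `(X, d)` that are not centered spheres. -/

theorem stmt_18 {X Y : Type*} [Finite X] (hne : Nonempty X)
    (d : X → X → ℝ) (hd : IsUltrametricOn d)
    (ρ : Y → Y → ℝ) (hext : IsUGVLExtension d ρ) :
    IsMinimalUGVLExtension d ρ ↔
      Nat.card Y =
        {B : Set X | IsOpenBallOf d B ∧ ¬ IsCenteredSphereOf d B}.ncard + Nat.card X := by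
  classical
  haveI := hne
  constructor
  · rintro ⟨hext', hmin⟩
    obtain ⟨Y₀, hY₀card, hY₀ext⟩ := main_construction hd hext
    have hY₀univ : Y₀ = Set.univ := by
      by_contra h
      exact hmin Y₀ h hY₀ext
    rw [← Set.ncard_univ, ← hY₀univ, hY₀card]
  · intro hcardY
    refine ⟨hext, ?_⟩
    intro Y₀ hY₀ hY₀ext
    have hXpos : 0 < Nat.card X := Nat.card_pos
    have hpos : 0 < Nat.card Y := by omega
    haveI hYfin : Finite Y := (Nat.card_pos_iff.1 hpos).2
    obtain ⟨Y₁, hY₁card, _⟩ := main_construction hd hY₀ext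
    have h1 : Y₁.ncard ≤ Nat.card ↥Y₀ := by
      have := Set.ncard_le_ncard (Set.subset_univ Y₁) (Set.toFinite _)
      rwa [Set.ncard_univ] at this
    have h2 : Nat.card ↥Y₀ = Y₀.ncard := Nat.card_coe_set_eq Y₀
    have h3 : Y₀.ncard < Nat.card Y := by
      rw [← Set.ncard_univ]
      exact Set.ncard_lt_ncard (Set.ssubset_univ_iff.2 hY₀) (Set.toFinite _)
    rw [hY₁card] at h1
    omega
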